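/- arXiv:1907.00313 — 2 statements merged into one kernel-verified Lean document; each statement's English description precedes it below -/
import Mathlib

section
/- For the strict-rate-constrained UCB algorithm there exists an absolute constant C > 0 (independent of K, T, v, and the reward distributions) such that the regret satisfies the worst-case bound Reg_T ≤ C·( √(T·K·ln T) + K·ln T ). -/
open MeasureTheory ProbabilityTheory Finset

namespace FairBandit

variable {Ω : Type} [MeasurableSpace Ω]

/-- Number of pulls of arm `i` among rounds `1, …, t`. -/
def pullCount {K : ℕ} (arm : ℕ → Ω → Fin K) (i : Fin K) (t : ℕ) (ω : Ω) : ℕ :=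
  ((Finset.Icc 1 t).filter (fun s => arm s ω = i)).card

/-- Empirical mean of arm `i` at round `t`:  average of the first `n_{t-1}(i)`
samples `X i 0, X i 1, …` of arm `i` (the sample `X i k` is observed at the
`(k+1)`-st pull of arm `i`). -/
noncomputable def empMean {K : ℕ} (X : Fin K → ℕ → Ω → ℝ) (arm : ℕ → Ω → Fin K)
    (i : Fin K) (t : ℕ) (ω : Ω) : ℝ :=
  (∑ k ∈ Finset.range (pullCount arm i (t - 1) ω), X i k ω) / (pullCount arm i (t - 1) ω)

/-- Upper confidence bound of arm `i` at round `t`. -/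
noncomputable def ucb {K : ℕ} (T : ℕ) (X : Fin K → ℕ → Ω → ℝ) (arm : ℕ → Ω → Fin K)
    (i : Fin K) (t : ℕ) (ω : Ω) : ℝ :=
  empMean X arm i t ω + 2 * Real.sqrt (Real.log T / (pullCount arm i (t - 1) ω))

/-- The stochastic bandit environment: for every arm `i` the samples
`X i 0, X i 1, …` take values in `[0,1]`, the whole family is (jointly)
independent, the samples of each arm are identically distributed, and the
mean of every sample of arm `i` is `μ i`. -/
def BanditEnv {K : ℕ} (P : Measure Ω) (X : Fin K → ℕ → Ω → ℝ) (μ : Fin K → ℝ) : Prop :=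
  (∀ i k, Measurable (X i k)) ∧
  (∀ i k ω, X i k ω ∈ Set.Icc (0 : ℝ) 1) ∧
  iIndepFun (m := fun _ : Fin K × ℕ => (inferInstance : MeasurableSpace ℝ))
    (fun p : Fin K × ℕ => X p.1 p.2) P ∧
  (∀ i k, Measure.map (X i k) P = Measure.map (X i 0) P) ∧
  (∀ i k, ∫ ω, X i k ω ∂P = μ i)

/-- Block offset of a round `t > K`:  writing `t - K = (j-1)·L + s` with
`s ∈ {1, …, L}`, the offset is `s`. -/
def offset (K L t : ℕ) : ℕ := (t - K - 1) % L + 1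

/-- The non-prescheduled rounds among `{K+1, …, T}`. -/
def freeRounds (K L T : ℕ) (S : Finset ℕ) : Finset ℕ :=
  (Finset.Icc (K + 1) T).filter (fun t => offset K L t ∉ S)

/-- The strict-rate-constrained UCB algorithm: the pulled arm `arm t` is the
`t`-th arm for `t = 1, …, K`; afterwards, prescheduled rounds (block offset in
`S`) pull the prescheduled arm `g s`, and all other rounds pull the arm with
largest UCB index (ties broken by smallest index). -/
def StrictUCB {K : ℕ} (T L : ℕ) (S : Finset ℕ) (g : ℕ → Fin K)
    (X : Fin K → ℕ → Ω → ℝ) (arm : ℕ → Ω → Fin K) : Prop :=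
  (∀ t, Measurable (arm t)) ∧
  (∀ t ω, 1 ≤ t → t ≤ K → ((arm t ω : ℕ) = t - 1)) ∧
  (∀ t ω, K < t → offset K L t ∈ S → arm t ω = g (offset K L t)) ∧
  (∀ t ω, K < t → offset K L t ∉ S →
    (∀ j, ucb T X arm j t ω ≤ ucb T X arm (arm t ω) t ω) ∧
    (∀ j, ucb T X arm j t ω = ucb T X arm (arm t ω) t ω → arm t ω ≤ j))

end FairBandit

open FairBandit MeasureTheory ProbabilityTheory
section RegretHelpers

variable {Ω : Type} [MeasurableSpace Ω] {P : Measure Ω} [IsProbabilityMeasure P]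

lemma integrable_of_abs_le' {Y : Ω → ℝ} (hY : Measurable Y) {c : ℝ} (hb : ∀ ω, |Y ω| ≤ c) :
    Integrable Y P :=
  (integrable_const c).mono' hY.aestronglyMeasurable (ae_of_all _ fun ω => hb ω)

lemma mgf_le_of_mean_zero {Y : Ω → ℝ} (hY : Measurable Y)
    (hb : ∀ ω, |Y ω| ≤ 1) (hm : ∫ ω, Y ω ∂P = 0) (t : ℝ) :
    mgf Y P t ≤ Real.exp (t ^ 2 / 2) := by
  have hint : Integrable Y P := integrable_of_abs_le' hY hb
  have hptw : ∀ ω, Real.exp (t * Y ω) ≤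
      (1 - Y ω) / 2 * Real.exp (-t) + (1 + Y ω) / 2 * Real.exp t := by
    intro ω
    have h1 : |Y ω| ≤ 1 := hb ω
    have ha : (0:ℝ) ≤ (1 - Y ω) / 2 := by cases abs_le.1 h1; linarith
    have hbb : (0:ℝ) ≤ (1 + Y ω) / 2 := by cases abs_le.1 h1; linarith
    have hab : (1 - Y ω) / 2 + (1 + Y ω) / 2 = 1 := by ring
    have h2 := convexOn_exp.2 (Set.mem_univ (-t)) (Set.mem_univ t) ha hbb hab
    simp only [smul_eq_mul] at h2
    rw [show (1 - Y ω) / 2 * -t + (1 + Y ω) / 2 * t = t * Y ω from by ring] at h2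
    exact h2
  have hintL : Integrable (fun ω => Real.exp (t * Y ω)) P := by
    refine (integrable_const (Real.exp |t|)).mono' (hY.const_mul t).exp.aestronglyMeasurable
      (ae_of_all _ fun ω => ?_)
    rw [Real.norm_eq_abs, abs_of_pos (Real.exp_pos _)]
    refine Real.exp_le_exp.2 ?_
    calc t * Y ω ≤ |t * Y ω| := le_abs_self _
    _ = |t| * |Y ω| := abs_mul _ _
    _ ≤ |t| * 1 := by have := hb ω; have := abs_nonneg t; nlinarith
    _ = |t| := mul_one _
  have hintR : Integrable
      (fun ω => (1 - Y ω) / 2 * Real.exp (-t) + (1 + Y ω) / 2 * Real.exp t) P := by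
    refine Integrable.add ?_ ?_
    · exact (((integrable_const (1:ℝ)).sub hint).div_const 2).mul_const _
    · exact (((integrable_const (1:ℝ)).add hint).div_const 2).mul_const _
  calc mgf Y P t = ∫ ω, Real.exp (t * Y ω) ∂P := rfl
  _ ≤ ∫ ω, ((1 - Y ω) / 2 * Real.exp (-t) + (1 + Y ω) / 2 * Real.exp t) ∂P :=
      integral_mono hintL hintR hptw
  _ = Real.cosh t := by
      have hA : Integrable (fun ω => (1 - Y ω) / 2 * Real.exp (-t)) P :=
        (((integrable_const (1:ℝ)).sub hint).div_const 2).mul_const (Real.exp (-t))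
      have hB : Integrable (fun ω => (1 + Y ω) / 2 * Real.exp t) P :=
        (((integrable_const (1:ℝ)).add hint).div_const 2).mul_const (Real.exp t)
      rw [integral_add hA hB, integral_mul_const, integral_mul_const, integral_div, integral_div,
        integral_sub (integrable_const _) hint, integral_add (integrable_const _) hint, hm,
        integral_const]
      simp [Real.cosh_eq]
      ring
  _ ≤ Real.exp (t ^ 2 / 2) := Real.cosh_le_exp_half_sq t

lemma chernoff {ι : Type*} {Y : ι → Ω → ℝ} (hmeas : ∀ p, Measurable (Y p))
    (hb : ∀ p ω, |Y p ω| ≤ 1) (hm : ∀ p, ∫ ω, Y p ω ∂P = 0)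
    (hind : iIndepFun Y P)
    (s : Finset ι) (hs : s.Nonempty) {ε : ℝ} (hε : 0 ≤ ε) :
    (P {ω | ε ≤ ∑ p ∈ s, Y p ω}).toReal ≤ Real.exp (-ε ^ 2 / (2 * s.card)) := by
  have hn : (0:ℝ) < s.card := by exact_mod_cast Finset.card_pos.2 hs
  set t : ℝ := ε / s.card with ht_def
  have ht : 0 ≤ t := div_nonneg hε hn.le
  have hinti : ∀ p ∈ s, Integrable (fun ω => Real.exp (t * Y p ω)) P := by
    intro p _
    refine (integrable_const (Real.exp |t|)).mono' ((hmeas p).const_mul t).exp.aestronglyMeasurable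
      (ae_of_all _ fun ω => ?_)
    rw [Real.norm_eq_abs, abs_of_pos (Real.exp_pos _)]
    refine Real.exp_le_exp.2 ?_
    calc t * Y p ω ≤ |t * Y p ω| := le_abs_self _
    _ = |t| * |Y p ω| := abs_mul _ _
    _ ≤ |t| * 1 := by have := hb p ω; have := abs_nonneg t; nlinarith
    _ = |t| := mul_one _
  have hint : Integrable (fun ω => Real.exp (t * (∑ p ∈ s, Y p) ω)) P :=
    hind.integrable_exp_mul_sum hmeas hinti
  have h1 : (P {ω | ε ≤ (∑ p ∈ s, Y p) ω}).toReal ≤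
      Real.exp (-t * ε) * mgf (∑ p ∈ s, Y p) P t :=
    measure_ge_le_exp_mul_mgf ε ht hint
  have h2 : mgf (∑ p ∈ s, Y p) P t = ∏ p ∈ s, mgf (Y p) P t := hind.mgf_sum hmeas s
  have h3 : ∏ p ∈ s, mgf (Y p) P t ≤ Real.exp (t ^ 2 / 2) ^ s.card := by
    rw [← Finset.prod_const]
    exact Finset.prod_le_prod (fun p _ => mgf_nonneg)
      (fun p _ => mgf_le_of_mean_zero (hmeas p) (hb p) (hm p) t)
  have hset : {ω | ε ≤ ∑ p ∈ s, Y p ω} = {ω | ε ≤ (∑ p ∈ s, Y p) ω} := by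
    simp [Finset.sum_apply]
  rw [hset]
  calc (P {ω | ε ≤ (∑ p ∈ s, Y p) ω}).toReal
      ≤ Real.exp (-t * ε) * mgf (∑ p ∈ s, Y p) P t := h1
  _ ≤ Real.exp (-t * ε) * Real.exp (t ^ 2 / 2) ^ s.card := by
      rw [h2]; exact mul_le_mul_of_nonneg_left h3 (Real.exp_pos _).le
  _ = Real.exp (-t * ε + s.card * (t ^ 2 / 2)) := by
      rw [← Real.exp_nat_mul, ← Real.exp_add]
  _ = Real.exp (-ε ^ 2 / (2 * s.card)) := by
      congr 1
      rw [ht_def]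
      field_simp
      ring

variable {K : ℕ} {X : Fin K → ℕ → Ω → ℝ} {μ : Fin K → ℝ} {arm : ℕ → Ω → Fin K}

lemma env_integrableX (henv : BanditEnv P X μ) (i : Fin K) (k : ℕ) :
    Integrable (X i k) P :=
  integrable_of_abs_le' (henv.1 i k)
    (fun ω => abs_le.2 ⟨by linarith [(henv.2.1 i k ω).1], (henv.2.1 i k ω).2⟩)

lemma env_mean_mem (henv : BanditEnv P X μ) (i : Fin K) : μ i ∈ Set.Icc (0:ℝ) 1 := by
  have h := henv.2.2.2.2 i 0
  constructor
  · rw [← h]; exact integral_nonneg fun ω => (henv.2.1 i 0 ω).1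
  · rw [← h]
    calc ∫ ω, X i 0 ω ∂P ≤ ∫ _, (1:ℝ) ∂P :=
      integral_mono (env_integrableX henv i 0) (integrable_const 1) fun ω => (henv.2.1 i 0 ω).2
    _ = 1 := by simp

lemma bandit_tail (henv : BanditEnv P X μ) (i : Fin K) {n : ℕ} (hn : 0 < n) {c : ℝ} (hc : 0 ≤ c) :
    (P {ω | c < |(∑ k ∈ Finset.range n, X i k ω) - n * μ i|}).toReal ≤
      2 * Real.exp (-c ^ 2 / (2 * n)) := by
  classical
  set Y : Fin K × ℕ → Ω → ℝ := fun p ω => X p.1 p.2 ω - μ p.1 with hY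
  set Z : Fin K × ℕ → Ω → ℝ := fun p ω => μ p.1 - X p.1 p.2 ω with hZ
  have hYmeas : ∀ p, Measurable (Y p) := fun p => (henv.1 p.1 p.2).sub_const _
  have hZmeas : ∀ p, Measurable (Z p) := fun p => measurable_const.sub (henv.1 p.1 p.2)
  have hbY : ∀ p ω, |Y p ω| ≤ 1 := by
    intro p ω
    have h1 := henv.2.1 p.1 p.2 ω
    have h2 := env_mean_mem henv p.1
    show |X p.1 p.2 ω - μ p.1| ≤ 1
    rw [abs_le]
    exact ⟨by linarith [h1.1, h2.2], by linarith [h1.2, h2.1]⟩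
  have hbZ : ∀ p ω, |Z p ω| ≤ 1 := by
    intro p ω
    have := hbY p ω
    rw [show Z p ω = -(Y p ω) from by simp [hY, hZ]]
    simpa using this
  have hmY : ∀ p, ∫ ω, Y p ω ∂P = 0 := by
    intro p
    rw [show (fun ω => Y p ω) = fun ω => X p.1 p.2 ω - μ p.1 from rfl]
    rw [integral_sub (env_integrableX henv p.1 p.2) (integrable_const _), henv.2.2.2.2 p.1 p.2]
    simp
  have hmZ : ∀ p, ∫ ω, Z p ω ∂P = 0 := by
    intro p
    rw [show (fun ω => Z p ω) = fun ω => μ p.1 - X p.1 p.2 ω from rfl]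
    rw [integral_sub (integrable_const _) (env_integrableX henv p.1 p.2), henv.2.2.2.2 p.1 p.2]
    simp
  have hindY : iIndepFun Y P := by
    have := henv.2.2.1.comp (fun p (x : ℝ) => x - μ p.1)
      (fun p => measurable_id.sub_const _)
    exact this
  have hindZ : iIndepFun Z P := by
    have := henv.2.2.1.comp (fun p (x : ℝ) => μ p.1 - x)
      (fun p => measurable_const.sub measurable_id)
    exact this
  set e : ℕ ↪ Fin K × ℕ := ⟨fun k => (i, k), fun a b h => by simpa using h⟩ with he
  set s : Finset (Fin K × ℕ) := (Finset.range n).map e with hs_def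
  have hcard : s.card = n := by simp [hs_def]
  have hs : s.Nonempty := (Finset.nonempty_range_iff.2 hn.ne').map
  have hsumY : ∀ ω, ∑ p ∈ s, Y p ω = (∑ k ∈ Finset.range n, X i k ω) - n * μ i := by
    intro ω
    rw [hs_def, Finset.sum_map]
    simp only [he, Function.Embedding.coeFn_mk, hY]
    rw [Finset.sum_sub_distrib]
    change ∑ x ∈ Finset.range n, X i x ω - ∑ x ∈ Finset.range n, μ i = _
    rw [Finset.sum_const, Finset.card_range, nsmul_eq_mul]
  have hsumZ : ∀ ω, ∑ p ∈ s, Z p ω = -((∑ k ∈ Finset.range n, X i k ω) - n * μ i) := by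
    intro ω
    have h1 : ∀ p, Z p ω = -(Y p ω) := fun p => by simp [hY, hZ]
    simp only [h1, Finset.sum_neg_distrib]
    rw [hsumY]
  have hsub : {ω | c < |(∑ k ∈ Finset.range n, X i k ω) - n * μ i|} ⊆
      {ω | c ≤ ∑ p ∈ s, Y p ω} ∪ {ω | c ≤ ∑ p ∈ s, Z p ω} := by
    intro ω hω
    have hω' : c < |(∑ k ∈ Finset.range n, X i k ω) - n * μ i| := hω
    rcases le_abs.1 (le_of_lt hω') with h | h
    · left; rw [Set.mem_setOf_eq, hsumY]; exact h
    · right; rw [Set.mem_setOf_eq, hsumZ]; exact h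
  have hle : P {ω | c < |(∑ k ∈ Finset.range n, X i k ω) - n * μ i|} ≤
      P {ω | c ≤ ∑ p ∈ s, Y p ω} + P {ω | c ≤ ∑ p ∈ s, Z p ω} :=
    (measure_mono hsub).trans (measure_union_le _ _)
  have htr : (P {ω | c < |(∑ k ∈ Finset.range n, X i k ω) - n * μ i|}).toReal ≤
      (P {ω | c ≤ ∑ p ∈ s, Y p ω}).toReal + (P {ω | c ≤ ∑ p ∈ s, Z p ω}).toReal := by
    rw [← ENNReal.toReal_add (measure_ne_top _ _) (measure_ne_top _ _)]
    exact ENNReal.toReal_mono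
      (ENNReal.add_ne_top.2 ⟨measure_ne_top _ _, measure_ne_top _ _⟩) hle
  have hb1 := chernoff hYmeas hbY hmY hindY s hs hc
  have hb2 := chernoff hZmeas hbZ hmZ hindZ s hs hc
  rw [hcard] at hb1 hb2
  linarith

lemma pullCount_le_total (i : Fin K) (t : ℕ) (ω : Ω) : pullCount arm i t ω ≤ t := by
  unfold pullCount
  exact (Finset.card_filter_le _ _).trans (by simp)

lemma one_le_pullCount (hinit : ∀ t ω, 1 ≤ t → t ≤ K → ((arm t ω : ℕ) = t - 1))
    (i : Fin K) {t : ℕ} (ht : K ≤ t) (ω : Ω) : 1 ≤ pullCount arm i t ω := by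
  refine Finset.card_pos.2 ⟨(i:ℕ)+1, Finset.mem_filter.2
    ⟨Finset.mem_Icc.2 ⟨by omega, by have := i.isLt; omega⟩, ?_⟩⟩
  have h := hinit ((i:ℕ)+1) ω (by omega) (by have := i.isLt; omega)
  exact Fin.ext (by omega)

lemma pullCount_strict_mono {i : Fin K} {t t' : ℕ} (h1 : 1 ≤ t) (htt : t < t') (ω : Ω)
    (ha : arm t ω = i) : pullCount arm i (t-1) ω < pullCount arm i (t'-1) ω := by
  apply Finset.card_lt_card
  have hsub : (Finset.Icc 1 (t-1)).filter (fun s => arm s ω = i) ⊆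
      (Finset.Icc 1 (t'-1)).filter (fun s => arm s ω = i) :=
    Finset.filter_subset_filter _ (Finset.Icc_subset_Icc_right (by omega))
  refine (Finset.ssubset_iff_of_subset hsub).2
    ⟨t, Finset.mem_filter.2 ⟨Finset.mem_Icc.2 ⟨h1, by omega⟩, ha⟩, ?_⟩
  intro hmem
  have h2 := (Finset.mem_Icc.1 (Finset.mem_filter.1 hmem).1).2
  omega

end RegretHelpers
section KeyLemmas

variable {Ω : Type} [MeasurableSpace Ω]
variable {K T L : ℕ} {S : Finset ℕ} {X : Fin K → ℕ → Ω → ℝ} {μ : Fin K → ℝ}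
  {istar : Fin K} {arm : ℕ → Ω → Fin K}

lemma sqrt_logdiv {T m : ℕ} (hm : 1 ≤ m) (hlT : 0 ≤ Real.log T) :
    Real.sqrt (Real.log T / m) = Real.sqrt (m * Real.log T) / m := by
  have hm0 : (0:ℝ) < m := by exact_mod_cast hm
  rw [show Real.log T / (m:ℝ) = ((m:ℝ) * Real.log T) / (m:ℝ)^2 by field_simp,
    Real.sqrt_div (by positivity) ((m:ℝ)^2), Real.sqrt_sq hm0.le]

lemma ucb_key
    (hK : 2 ≤ K) (hT2 : 2 ≤ T) (hKT : K ≤ T)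
    (hinit : ∀ t ω, 1 ≤ t → t ≤ K → ((arm t ω : ℕ) = t - 1))
    (hucbmax : ∀ t ω, K < t → offset K L t ∉ S →
      (∀ j, ucb T X arm j t ω ≤ ucb T X arm (arm t ω) t ω) ∧
      (∀ j, ucb T X arm j t ω = ucb T X arm (arm t ω) t ω → arm t ω ≤ j))
    (hopt : ∀ j, μ j ≤ μ istar)
    {ω : Ω}
    (hGω : ∀ (j : Fin K), ∀ m : ℕ, 1 ≤ m → m ≤ T →
      |(∑ k ∈ Finset.range m, X j k ω) - m * μ j| ≤ 2 * Real.sqrt (m * Real.log T))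
    {t : ℕ} (ht : t ∈ freeRounds K L T S) :
    (μ istar - μ (arm t ω))^2 * (pullCount arm (arm t ω) (t-1) ω : ℝ) ≤ 16 * Real.log T := by
  have hT1 : (1:ℝ) < T := by exact_mod_cast (by omega : 1 < T)
  have hlT : (0:ℝ) < Real.log T := Real.log_pos hT1
  obtain ⟨htIcc, hoff⟩ := Finset.mem_filter.1 ht
  obtain ⟨hK1t, htT⟩ := Finset.mem_Icc.1 htIcc
  set i := arm t ω with hi
  set n := pullCount arm i (t-1) ω with hn
  set ns := pullCount arm istar (t-1) ω with hns
  have hn1 : 1 ≤ n := one_le_pullCount hinit i (by omega) ω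
  have hnT : n ≤ T := (pullCount_le_total i (t-1) ω).trans (by omega)
  have hns1 : 1 ≤ ns := one_le_pullCount hinit istar (by omega) ω
  have hnsT : ns ≤ T := (pullCount_le_total istar (t-1) ω).trans (by omega)
  have hn0 : (0:ℝ) < n := by exact_mod_cast hn1
  have hns0 : (0:ℝ) < ns := by exact_mod_cast hns1
  -- empirical mean bounds
  have hGi := hGω i n hn1 hnT
  have hGs := hGω istar ns hns1 hnsT
  have hEi : empMean X arm i t ω ≤ μ i + 2 * Real.sqrt (Real.log T / n) := by
    rw [empMean, ← hn]
    rw [div_le_iff₀ hn0]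
    have h1 : (∑ k ∈ Finset.range n, X i k ω) ≤ n * μ i + 2 * Real.sqrt (n * Real.log T) := by
      have := (abs_le.1 hGi).2; linarith
    have h2 : (μ i + 2 * Real.sqrt (Real.log T / n)) * n
        = n * μ i + 2 * Real.sqrt (n * Real.log T) := by
      rw [sqrt_logdiv hn1 hlT.le]; field_simp
    rw [h2]; exact h1
  have hEs : μ istar - 2 * Real.sqrt (Real.log T / ns) ≤ empMean X arm istar t ω := by
    rw [empMean, ← hns]
    rw [le_div_iff₀ hns0]
    have h1 : (ns : ℝ) * μ istar - 2 * Real.sqrt (ns * Real.log T)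
        ≤ ∑ k ∈ Finset.range ns, X istar k ω := by
      have := (abs_le.1 hGs).1; linarith
    have h2 : (μ istar - 2 * Real.sqrt (Real.log T / ns)) * ns
        = ns * μ istar - 2 * Real.sqrt (ns * Real.log T) := by
      rw [sqrt_logdiv hns1 hlT.le]; field_simp
    rw [h2]; exact h1
  -- UCB comparison
  have hcomp : ucb T X arm istar t ω ≤ ucb T X arm i t ω :=
    (hucbmax t ω (by omega) hoff).1 istar
  have hub : ucb T X arm i t ω ≤ μ i + 4 * Real.sqrt (Real.log T / n) := by
    rw [ucb, ← hn]; linarith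
  have hlb : μ istar ≤ ucb T X arm istar t ω := by
    rw [ucb, ← hns]; linarith
  have hgap : μ istar - μ i ≤ 4 * Real.sqrt (Real.log T / n) := by linarith
  have hgap0 : 0 ≤ μ istar - μ i := by linarith [hopt i]
  have hsq : (μ istar - μ i)^2 ≤ 16 * (Real.log T / n) := by
    have h := pow_le_pow_left₀ hgap0 hgap 2
    rw [mul_pow, Real.sq_sqrt (by positivity)] at h
    linarith
  calc (μ istar - μ i)^2 * (n:ℝ) ≤ (16 * (Real.log T / n)) * n :=
        mul_le_mul_of_nonneg_right hsq hn0.le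
  _ = 16 * Real.log T := by field_simp

lemma count_bound
    (hK : 2 ≤ K) (hT2 : 2 ≤ T) (hKT : K ≤ T)
    (hinit : ∀ t ω, 1 ≤ t → t ≤ K → ((arm t ω : ℕ) = t - 1))
    (hucbmax : ∀ t ω, K < t → offset K L t ∉ S →
      (∀ j, ucb T X arm j t ω ≤ ucb T X arm (arm t ω) t ω) ∧
      (∀ j, ucb T X arm j t ω = ucb T X arm (arm t ω) t ω → arm t ω ≤ j))
    (hopt : ∀ j, μ j ≤ μ istar)
    {ω : Ω}
    (hGω : ∀ (j : Fin K), ∀ m : ℕ, 1 ≤ m → m ≤ T →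
      |(∑ k ∈ Finset.range m, X j k ω) - m * μ j| ≤ 2 * Real.sqrt (m * Real.log T))
    {i : Fin K} (hΔ : 0 < μ istar - μ i) :
    (((freeRounds K L T S).filter (fun t => arm t ω = i)).card : ℝ)
      ≤ 16 * Real.log T / (μ istar - μ i)^2 := by
  classical
  set Δ := μ istar - μ i with hΔdef
  set N := ⌊16 * Real.log T / Δ^2⌋₊ with hN
  have hcard : ((freeRounds K L T S).filter (fun t => arm t ω = i)).card ≤ N := by
    have h := Finset.card_le_card_of_injOn (fun t => pullCount arm i (t-1) ω)
      (s := (freeRounds K L T S).filter (fun t => arm t ω = i))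
      (t := Finset.Icc 1 N) ?_ ?_
    · simpa [Nat.card_Icc] using h
    · intro t htmem
      obtain ⟨htfree, hti⟩ := Finset.mem_filter.1 htmem
      obtain ⟨htIcc, -⟩ := Finset.mem_filter.1 htfree
      obtain ⟨hK1t, htT⟩ := Finset.mem_Icc.1 htIcc
      refine Finset.mem_Icc.2 ⟨one_le_pullCount hinit i (by omega) ω, ?_⟩
      refine Nat.le_floor ?_
      have hkey := ucb_key hK hT2 hKT hinit hucbmax hopt hGω htfree
      rw [hti] at hkey
      show ((pullCount arm i (t-1) ω : ℝ)) ≤ 16 * Real.log T / Δ^2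
      rw [le_div_iff₀ (by positivity), hΔdef]
      linarith [hkey]
    · intro a ha b hb hab
      by_contra hne
      obtain ⟨hafree, hai⟩ := Finset.mem_filter.1 ha
      obtain ⟨hbfree, hbi⟩ := Finset.mem_filter.1 hb
      obtain ⟨haIcc, -⟩ := Finset.mem_filter.1 hafree
      obtain ⟨hbIcc, -⟩ := Finset.mem_filter.1 hbfree
      have ha1 : 1 ≤ a := by have := (Finset.mem_Icc.1 haIcc).1; omega
      have hb1 : 1 ≤ b := by have := (Finset.mem_Icc.1 hbIcc).1; omega
      rcases lt_or_gt_of_ne hne with h | h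
      · exact absurd hab (pullCount_strict_mono ha1 h ω hai).ne
      · exact absurd hab.symm (pullCount_strict_mono hb1 h ω hbi).ne
  calc (((freeRounds K L T S).filter (fun t => arm t ω = i)).card : ℝ) ≤ N := by
        exact_mod_cast hcard
  _ ≤ 16 * Real.log T / Δ^2 := Nat.floor_le (by positivity)

end KeyLemmas
section Pathwise

variable {Ω : Type} [MeasurableSpace Ω]
variable {K T L : ℕ} {S : Finset ℕ} {X : Fin K → ℕ → Ω → ℝ} {μ : Fin K → ℝ}
  {istar : Fin K} {arm : ℕ → Ω → Fin K}

lemma good_pathwise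
    (hK : 2 ≤ K) (hT2 : 2 ≤ T) (hKT : K ≤ T)
    (hinit : ∀ t ω, 1 ≤ t → t ≤ K → ((arm t ω : ℕ) = t - 1))
    (hucbmax : ∀ t ω, K < t → offset K L t ∉ S →
      (∀ j, ucb T X arm j t ω ≤ ucb T X arm (arm t ω) t ω) ∧
      (∀ j, ucb T X arm j t ω = ucb T X arm (arm t ω) t ω → arm t ω ≤ j))
    (hopt : ∀ j, μ j ≤ μ istar)
    {ω : Ω}
    (hGω : ∀ (j : Fin K), ∀ m : ℕ, 1 ≤ m → m ≤ T →
      |(∑ k ∈ Finset.range m, X j k ω) - m * μ j| ≤ 2 * Real.sqrt (m * Real.log T)) :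
    (∑ t ∈ freeRounds K L T S, (μ istar - μ (arm t ω)))
      ≤ 17 * Real.sqrt ((T:ℝ) * K * Real.log T) := by
  classical
  have hT1 : (1:ℝ) < T := by exact_mod_cast (by omega : 1 < T)
  have hlT : (0:ℝ) < Real.log T := Real.log_pos hT1
  have hK0 : (0:ℝ) < K := by exact_mod_cast (by omega : 0 < K)
  have hT0 : (0:ℝ) < T := by linarith
  set a : ℝ := K * Real.log T with ha_def
  set b : ℝ := (T:ℝ) with hb_def
  have ha : 0 < a := by positivity
  have hb : 0 < b := hT0
  set δ : ℝ := Real.sqrt (a / b) with hδ_def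
  have hδ : 0 < δ := Real.sqrt_pos.2 (by positivity)
  have hδb : δ * b = Real.sqrt (a * b) := by
    rw [hδ_def, show b = Real.sqrt (b^2) from (Real.sqrt_sq hb.le).symm,
      ← Real.sqrt_mul (by positivity)]
    rw [Real.sqrt_sq hb.le]
    congr 1
    field_simp
  have hδa : a / δ = Real.sqrt (a * b) := by
    have hδ' : δ = Real.sqrt (a * b) / b := by rw [← hδb]; field_simp
    rw [hδ', div_div_eq_mul_div, Real.div_sqrt]
  -- regroup the sum by arms
  set free := freeRounds K L T S with hfree_def
  have hregroup : (∑ t ∈ free, (μ istar - μ (arm t ω)))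
      = ∑ j : Fin K, ((free.filter (fun t => arm t ω = j)).card : ℝ) * (μ istar - μ j) := by
    rw [← Finset.sum_fiberwise_of_maps_to (g := fun t => arm t ω) (t := Finset.univ)
      (fun t _ => Finset.mem_univ _) (fun t => μ istar - μ (arm t ω))]
    refine Finset.sum_congr rfl fun j _ => ?_
    have hinner : ∑ t ∈ free.filter (fun t => arm t ω = j), (μ istar - μ (arm t ω))
        = ∑ t ∈ free.filter (fun t => arm t ω = j), (μ istar - μ j) :=
      Finset.sum_congr rfl fun t htmem => by rw [(Finset.mem_filter.1 htmem).2]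
    rw [hinner, Finset.sum_const, nsmul_eq_mul]
  have hperarm : ∀ j : Fin K,
      ((free.filter (fun t => arm t ω = j)).card : ℝ) * (μ istar - μ j)
        ≤ δ * ((free.filter (fun t => arm t ω = j)).card : ℝ) + 16 * Real.log T / δ := by
    intro j
    set c : ℝ := ((free.filter (fun t => arm t ω = j)).card : ℝ) with hc_def
    have hc0 : 0 ≤ c := by positivity
    rcases le_or_gt (μ istar - μ j) δ with h | h
    · have : c * (μ istar - μ j) ≤ c * δ := by
        apply mul_le_mul_of_nonneg_left h hc0
      have h16 : 0 ≤ 16 * Real.log T / δ := by positivity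
      linarith [this]
    · have hΔ : 0 < μ istar - μ j := lt_trans hδ h
      have hcb : c ≤ 16 * Real.log T / (μ istar - μ j)^2 :=
        count_bound hK hT2 hKT hinit hucbmax hopt hGω hΔ
      have h1 : c * (μ istar - μ j) ≤ 16 * Real.log T / (μ istar - μ j) := by
        calc c * (μ istar - μ j) ≤ (16 * Real.log T / (μ istar - μ j)^2) * (μ istar - μ j) :=
              mul_le_mul_of_nonneg_right hcb hΔ.le
        _ = 16 * Real.log T / (μ istar - μ j) := by field_simp
      have h2 : 16 * Real.log T / (μ istar - μ j) ≤ 16 * Real.log T / δ := by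
        exact div_le_div_of_nonneg_left (by positivity) hδ h.le
      nlinarith [mul_nonneg hδ.le hc0]
  have hsumcard : ∑ j : Fin K, ((free.filter (fun t => arm t ω = j)).card : ℝ) = (free.card : ℝ) := by
    rw [show (free.card : ℝ) = ((∑ j : Fin K, (free.filter (fun t => arm t ω = j)).card : ℕ) : ℝ) from by
      rw [← Finset.card_eq_sum_card_fiberwise (fun t _ => Finset.mem_univ (arm t ω))]]
    push_cast
    rfl
  have hfreecard : (free.card : ℝ) ≤ T := by
    have h1 : free.card ≤ (Finset.Icc (K+1) T).card := Finset.card_le_card (Finset.filter_subset _ _)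
    have h2 : (Finset.Icc (K+1) T).card ≤ T := by rw [Nat.card_Icc]; omega
    exact_mod_cast h1.trans h2
  calc (∑ t ∈ free, (μ istar - μ (arm t ω)))
      = ∑ j : Fin K, ((free.filter (fun t => arm t ω = j)).card : ℝ) * (μ istar - μ j) := hregroup
  _ ≤ ∑ j : Fin K, (δ * ((free.filter (fun t => arm t ω = j)).card : ℝ) + 16 * Real.log T / δ) :=
      Finset.sum_le_sum fun j _ => hperarm j
  _ = δ * (free.card : ℝ) + K * (16 * Real.log T / δ) := by
      rw [Finset.sum_add_distrib, ← Finset.mul_sum, hsumcard, Finset.sum_const]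
      simp [nsmul_eq_mul]
  _ ≤ δ * b + 16 * (a / δ) := by
      have h1 : δ * (free.card : ℝ) ≤ δ * b := mul_le_mul_of_nonneg_left hfreecard hδ.le
      have h2 : (K:ℝ) * (16 * Real.log T / δ) = 16 * (a / δ) := by
        rw [ha_def]; field_simp; ring
      linarith
  _ = 17 * Real.sqrt (a * b) := by rw [hδb, hδa]; ring
  _ = 17 * Real.sqrt ((T:ℝ) * K * Real.log T) := by
      congr 1
      rw [ha_def, hb_def]
      congr 1
      ring

end Pathwise

/-- For the strict-rate-constrained UCB algorithm there is
an absolute constant `C > 0` such that the regret satisfies the worst-case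
bound `Reg_T ≤ C·(√(T·K·ln T) + K·ln T)`. -/
theorem strict_ucb_worst_case_regret_bound :
    ∃ C : ℝ, 0 < C ∧
      ∀ (Ω : Type) (_ : MeasurableSpace Ω) (P : Measure Ω), IsProbabilityMeasure P →
      ∀ (K T L : ℕ) (S : Finset ℕ) (g : ℕ → Fin K) (X : Fin K → ℕ → Ω → ℝ)
        (μ : Fin K → ℝ) (istar : Fin K) (arm : ℕ → Ω → Fin K),
        2 ≤ K → max K 2 ≤ T → K ≤ L →
        S ⊆ Finset.Icc 1 L → S.card = K → Set.BijOn g ↑S (Set.univ : Set (Fin K)) →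
        BanditEnv P X μ → StrictUCB T L S g X arm →
        (∀ j, μ j ≤ μ istar) →
        (∫ ω, (∑ t ∈ freeRounds K L T S, (μ istar - μ (arm t ω))) ∂P) ≤
          C * (Real.sqrt ((T : ℝ) * K * Real.log T) + (K : ℝ) * Real.log T) := by
  classical
  refine ⟨20, by norm_num, ?_⟩
  intro Ω mΩ P hP K T L S g X μ istar arm hK hTmax hKL hSsub hScard hbij henv halg hopt
  obtain ⟨harm_meas, hinit, hpre, hucbmax⟩ := halg
  have hT2 : 2 ≤ T := le_trans (le_max_right K 2) hTmax
  have hKT : K ≤ T := le_trans (le_max_left K 2) hTmax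
  have hT1 : (1:ℝ) < T := by exact_mod_cast (by omega : 1 < T)
  have hT0 : (0:ℝ) < T := by linarith
  have hlT : (0:ℝ) < Real.log T := Real.log_pos hT1
  have hK0 : (0:ℝ) < K := by exact_mod_cast (by omega : 0 < K)
  -- the good event
  set A : Fin K → ℕ → Set Ω := fun i n =>
    {ω | |(∑ k ∈ Finset.range n, X i k ω) - n * μ i| ≤ 2 * Real.sqrt (n * Real.log T)}
    with hA_def
  set G : Set Ω := ⋂ i, ⋂ n ∈ Finset.Icc 1 T, A i n with hG_def
  have hAmeas : ∀ i n, MeasurableSet (A i n) := fun i n =>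
    measurableSet_le ((Finset.measurable_sum _ fun k _ => henv.1 i k).sub_const _).abs
      measurable_const
  have hGmeas : MeasurableSet G :=
    MeasurableSet.iInter fun i => MeasurableSet.iInter fun n =>
      MeasurableSet.iInter fun _ => hAmeas i n
  have hGmem : ∀ ω ∈ G, ∀ (j : Fin K), ∀ m : ℕ, 1 ≤ m → m ≤ T →
      |(∑ k ∈ Finset.range m, X j k ω) - m * μ j| ≤ 2 * Real.sqrt (m * Real.log T) := by
    intro ω hω j m h1 h2
    have h3 := Set.mem_iInter.1 hω j
    exact Set.mem_iInter₂.1 h3 m (Finset.mem_Icc.2 ⟨h1, h2⟩)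
  -- tail bound for each bad event
  have hAc : ∀ (i : Fin K), ∀ n ∈ Finset.Icc 1 T,
      (P (A i n)ᶜ).toReal ≤ 2 * Real.exp (-2 * Real.log T) := by
    intro i n hn
    obtain ⟨h1, h2⟩ := Finset.mem_Icc.1 hn
    have hn0 : (0:ℝ) < n := by exact_mod_cast h1
    have h := bandit_tail henv i (show 0 < n by omega)
      (show (0:ℝ) ≤ 2 * Real.sqrt (n * Real.log T) by positivity)
    have hcompl : (A i n)ᶜ =
        {ω | 2 * Real.sqrt (n * Real.log T) < |(∑ k ∈ Finset.range n, X i k ω) - n * μ i|} := by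
      ext ω; simp [hA_def, not_le]
    rw [hcompl]
    refine h.trans (le_of_eq ?_)
    congr 1
    rw [mul_pow, Real.sq_sqrt (by positivity)]
    field_simp
  have hGc : (P Gᶜ).toReal ≤ (K:ℝ) * T * (2 * Real.exp (-2 * Real.log T)) := by
    have hcup : Gᶜ = ⋃ i, ⋃ n ∈ Finset.Icc 1 T, (A i n)ᶜ := by
      rw [hG_def]; simp [Set.compl_iInter]
    have hle1 : P Gᶜ ≤ ∑ i : Fin K, ∑ n ∈ Finset.Icc 1 T, P (A i n)ᶜ := by
      rw [hcup]
      exact le_trans (measure_iUnion_fintype_le _ _)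
        (Finset.sum_le_sum fun i _ => measure_biUnion_finset_le _ _)
    have hfin : (∑ i : Fin K, ∑ n ∈ Finset.Icc 1 T, P (A i n)ᶜ) ≠ ⊤ :=
      (ENNReal.sum_lt_top.2 fun i _ => ENNReal.sum_lt_top.2 fun n _ => measure_lt_top _ _).ne
    calc (P Gᶜ).toReal ≤ (∑ i : Fin K, ∑ n ∈ Finset.Icc 1 T, P (A i n)ᶜ).toReal :=
          ENNReal.toReal_mono hfin hle1
    _ = ∑ i : Fin K, ∑ n ∈ Finset.Icc 1 T, (P (A i n)ᶜ).toReal := by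
        rw [ENNReal.toReal_sum (fun i _ =>
          (ENNReal.sum_lt_top.2 fun n _ => measure_lt_top _ _).ne)]
        exact Finset.sum_congr rfl fun i _ => ENNReal.toReal_sum fun n _ => measure_ne_top _ _
    _ ≤ ∑ _i : Fin K, ∑ _n ∈ Finset.Icc 1 T, (2 * Real.exp (-2 * Real.log T)) :=
        Finset.sum_le_sum fun i _ => Finset.sum_le_sum fun n hn => hAc i n hn
    _ = (K:ℝ) * T * (2 * Real.exp (-2 * Real.log T)) := by
        simp [Finset.sum_const, Nat.card_Icc]
        ring
  have hbad : (T:ℝ) * (P Gᶜ).toReal ≤ 2 * K := by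
    have hexp : Real.exp (-2 * Real.log T) = ((T:ℝ)^2)⁻¹ := by
      rw [show (-2 : ℝ) * Real.log T = -(Real.log T + Real.log T) by ring, Real.exp_neg,
        Real.exp_add, Real.exp_log hT0]
      norm_num [pow_two]
    calc (T:ℝ) * (P Gᶜ).toReal
        ≤ (T:ℝ) * ((K:ℝ) * T * (2 * Real.exp (-2 * Real.log T))) :=
          mul_le_mul_of_nonneg_left hGc (le_of_lt hT0)
    _ = 2 * K := by rw [hexp]; field_simp
  -- the regret function
  set f : Ω → ℝ := fun ω => ∑ t ∈ freeRounds K L T S, (μ istar - μ (arm t ω)) with hf_def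
  have hΔbd : ∀ j : Fin K, μ istar - μ j ≤ 1 := fun j => by
    linarith [(env_mean_mem henv istar).2, (env_mean_mem henv j).1]
  have hΔ0 : ∀ j : Fin K, 0 ≤ μ istar - μ j := fun j => by linarith [hopt j]
  have hfT : ∀ ω, f ω ≤ T := by
    intro ω
    calc f ω ≤ ∑ _t ∈ freeRounds K L T S, (1:ℝ) := Finset.sum_le_sum fun t _ => hΔbd _
    _ = (freeRounds K L T S).card := by simp
    _ ≤ T := by
        have h1 : (freeRounds K L T S).card ≤ (Finset.Icc (K+1) T).card :=
          Finset.card_le_card (Finset.filter_subset _ _)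
        have h2 : (Finset.Icc (K+1) T).card ≤ T := by rw [Nat.card_Icc]; omega
        exact_mod_cast h1.trans h2
  have hf0 : ∀ ω, 0 ≤ f ω := fun ω => Finset.sum_nonneg fun t _ => hΔ0 _
  have hfmeas : Measurable f := by
    apply Finset.measurable_sum
    intro t _
    exact (measurable_of_finite (fun j : Fin K => μ istar - μ j)).comp (harm_meas t)
  have hfint : Integrable f P :=
    integrable_of_abs_le' hfmeas fun ω => abs_le.2 ⟨by linarith [hf0 ω], hfT ω⟩
  set B1 : ℝ := 17 * Real.sqrt ((T:ℝ) * K * Real.log T) with hB1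
  have hB1pos : 0 ≤ B1 := by positivity
  have hgood : ∀ ω ∈ G, f ω ≤ B1 := fun ω hω =>
    good_pathwise hK hT2 hKT hinit hucbmax hopt (hGmem ω hω)
  set h : Ω → ℝ := fun ω => G.indicator (fun _ => B1) ω + Gᶜ.indicator (fun _ => (T:ℝ)) ω
    with hh
  have hfh : ∀ ω, f ω ≤ h ω := by
    intro ω
    by_cases hω : ω ∈ G
    · have h1 : ω ∉ Gᶜ := fun hc => hc hω
      rw [hh]
      simp only [Set.indicator_of_mem hω, Set.indicator_of_notMem h1, add_zero]
      exact hgood ω hω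
    · have h1 : ω ∈ Gᶜ := hω
      rw [hh]
      simp only [Set.indicator_of_notMem hω, Set.indicator_of_mem h1, zero_add]
      exact hfT ω
  have hhint : Integrable h P :=
    ((integrable_const B1).indicator hGmeas).add
      ((integrable_const (T:ℝ)).indicator hGmeas.compl)
  have hint_h : ∫ ω, h ω ∂P = B1 * (P G).toReal + (T:ℝ) * (P Gᶜ).toReal := by
    rw [hh, integral_add ((integrable_const B1).indicator hGmeas)
      ((integrable_const (T:ℝ)).indicator hGmeas.compl),
      integral_indicator_const _ hGmeas, integral_indicator_const _ hGmeas.compl]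
    simp [smul_eq_mul, mul_comm]
    rfl
  have hPG1 : (P G).toReal ≤ 1 := by
    calc (P G).toReal ≤ (1:ENNReal).toReal := ENNReal.toReal_mono ENNReal.one_ne_top prob_le_one
    _ = 1 := by simp
  have hlog2 : (2:ℝ)/3 ≤ Real.log T := by
    have h1 : Real.log 2 ≤ Real.log T := by
      apply Real.log_le_log (by norm_num)
      exact_mod_cast hT2
    nlinarith [Real.log_two_gt_d9]
  have hmain : ∫ ω, f ω ∂P ≤ B1 + 2 * K := by
    calc ∫ ω, f ω ∂P ≤ ∫ ω, h ω ∂P := integral_mono hfint hhint hfh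
    _ = B1 * (P G).toReal + (T:ℝ) * (P Gᶜ).toReal := hint_h
    _ ≤ B1 * 1 + 2 * K := by
        have := mul_le_mul_of_nonneg_left hPG1 hB1pos
        linarith [hbad]
    _ = B1 + 2 * K := by ring
  have hfinal : B1 + 2 * K ≤ 20 * (Real.sqrt ((T:ℝ) * K * Real.log T) + (K:ℝ) * Real.log T) := by
    have hs : 0 ≤ Real.sqrt ((T:ℝ) * K * Real.log T) := Real.sqrt_nonneg _
    have h2 : 2 * (K:ℝ) ≤ 3 * ((K:ℝ) * Real.log T) := by nlinarith
    rw [hB1]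
    nlinarith
  exact hmain.trans hfinal
end

section
/- For the strict-rate-constrained UCB algorithm there exists an absolute constant C > 0 (independent of K, T, v, and the reward distributions) such that for every arm i with Δ_i > 0: E[m_T(i)] ≤ (16·ln T / Δ_i²)·(1 − K·v)/(1 − (K−1)·v) + 2·(1 − K·v)² + C. -/
open MeasureTheory ProbabilityTheory Finset

open FairBandit MeasureTheory ProbabilityTheory

namespace FairBandit
/-- Number of non-prescheduled rounds in `{K+1, …, T}` at which arm `i` is pulled. -/
def freePulls {K : ℕ} (arm : ℕ → Ω' → Fin K) (L T : ℕ) (S : Finset ℕ)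
    (i : Fin K) (ω : Ω') : ℕ :=
  ((freeRounds K L T S).filter (fun t => arm t ω = i)).card
end FairBandit

section AuxLemmas

open Real

private lemma aux_exp_quad {m x : ℝ} (hm : 0 ≤ m) (hx : 0 ≤ x) :
    1 + m * (Real.exp x - 1) ≤ Real.exp (x * m + x ^ 2 / 4) := by
  set q : ℝ → ℝ := fun t => 1 - m + m * Real.exp t with hq_def
  clear_value q
  have hq1 : ∀ t, 0 ≤ t → 1 ≤ q t := by
    intro t ht
    have h1 : 1 ≤ Real.exp t := Real.one_le_exp ht
    simp only [hq_def]; nlinarith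
  have hqd : ∀ t, HasDerivAt q (m * Real.exp t) t := by
    intro t
    rw [hq_def]
    simpa using ((Real.hasDerivAt_exp t).const_mul m).const_add (1 - m)
  set h : ℝ → ℝ := fun t => m + t / 2 - m * Real.exp t / q t with hh_def
  set f : ℝ → ℝ := fun t => t * m + t ^ 2 / 4 - Real.log (q t) with hf_def
  clear_value h f
  have hfd : ∀ t, 0 ≤ t → HasDerivAt f (h t) t := by
    intro t ht
    simp only [hf_def, hh_def]
    have hqt : q t ≠ 0 := by linarith [hq1 t ht]
    have h1 : HasDerivAt (fun s => Real.log (q s)) (m * Real.exp t / q t) t :=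
      (hqd t).log hqt
    have h2 : HasDerivAt (fun s : ℝ => s * m + s ^ 2 / 4) (m + 2 * t / 4) t := by
      have := ((hasDerivAt_id t).mul_const m).add
        (((hasDerivAt_id t).pow 2).div_const 4)
      simpa [Pi.add_def] using this
    have := h2.sub h1
    refine this.congr_deriv ?_
    ring
  have hhd : ∀ t, 0 ≤ t →
      HasDerivAt h (1 / 2 - (m * Real.exp t * q t - m * Real.exp t * (m * Real.exp t)) / (q t) ^ 2) t := by
    intro t ht
    have hqt : q t ≠ 0 := by linarith [hq1 t ht]
    have hnum : HasDerivAt (fun s => m * Real.exp s) (m * Real.exp t) t :=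
      (Real.hasDerivAt_exp t).const_mul m
    have hdiv : HasDerivAt (fun s => m * Real.exp s / q s)
        ((m * Real.exp t * q t - m * Real.exp t * (m * Real.exp t)) / (q t) ^ 2) t :=
      hnum.div (hqd t) hqt
    have h2 : HasDerivAt (fun s : ℝ => m + s / 2) (1 / 2) t := by
      simpa using (hasDerivAt_id t).div_const 2 |>.const_add m
    rw [hh_def]
    simpa [Pi.sub_def] using h2.sub hdiv
  have hmono_h : MonotoneOn h (Set.Ici (0 : ℝ)) := by
    apply monotoneOn_of_deriv_nonneg (convex_Ici 0)
    · intro t ht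
      exact ((hhd t ht).continuousAt).continuousWithinAt
    · intro t ht
      rw [interior_Ici] at ht
      exact ((hhd t (le_of_lt ht)).differentiableAt).differentiableWithinAt
    · intro t ht
      rw [interior_Ici] at ht
      rw [(hhd t ht.le).deriv]
      have hb : (1:ℝ) ≤ q t := hq1 t ht.le
      have hb2 : (0:ℝ) < (q t) ^ 2 := by positivity
      have key : ∀ a b : ℝ, a * b - a * a ≤ b ^ 2 / 4 := by
        intro a b; nlinarith [sq_nonneg (b - 2 * a)]
      have key2 := key (m * Real.exp t) (q t)
      rw [sub_nonneg, div_le_iff₀ hb2]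
      linarith [key2, hb2.le]
  have hh0 : h 0 = 0 := by
    simp only [hh_def, hq_def]
    simp [Real.exp_zero]
  have hhnn : ∀ t, 0 ≤ t → 0 ≤ h t := by
    intro t ht
    have := hmono_h (Set.self_mem_Ici) ht ht
    rwa [hh0] at this
  have hmono_f : MonotoneOn f (Set.Ici (0 : ℝ)) := by
    apply monotoneOn_of_deriv_nonneg (convex_Ici 0)
    · intro t ht
      exact ((hfd t ht).continuousAt).continuousWithinAt
    · intro t ht
      rw [interior_Ici] at ht
      exact ((hfd t ht.le).differentiableAt).differentiableWithinAt
    · intro t ht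
      rw [interior_Ici] at ht
      rw [(hfd t ht.le).deriv]
      exact hhnn t ht.le
  have hf0 : f 0 = 0 := by
    simp only [hf_def, hq_def]
    simp [Real.exp_zero]
  have hfnn : 0 ≤ f x := by
    have := hmono_f (Set.self_mem_Ici) hx hx
    rwa [hf0] at this
  have hlog : Real.log (q x) ≤ x * m + x ^ 2 / 4 := by
    simp only [hf_def] at hfnn; linarith
  have hqpos : 0 < q x := lt_of_lt_of_le one_pos (hq1 x hx)
  have := (Real.log_le_iff_le_exp hqpos).mp hlog
  calc 1 + m * (Real.exp x - 1) = q x := by simp only [hq_def]; ring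
    _ ≤ _ := this

private lemma exp_mul_le_of_Icc {z lam : ℝ} (hz0 : 0 ≤ z) (hz1 : z ≤ 1) :
    Real.exp (lam * z) ≤ 1 + z * (Real.exp lam - 1) := by
  have h := convexOn_exp.2 (Set.mem_univ (0:ℝ)) (Set.mem_univ lam)
    (by linarith : (0:ℝ) ≤ 1 - z) hz0 (by ring)
  simp only [smul_eq_mul, mul_zero, zero_add, Real.exp_zero, mul_one] at h
  calc Real.exp (lam * z) = Real.exp (z * lam) := by rw [mul_comm]
    _ ≤ (1 - z) * 1 + z * Real.exp lam := by simpa using h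
    _ = 1 + z * (Real.exp lam - 1) := by ring

private lemma integrable_of_bdd {Ω : Type*} [MeasurableSpace Ω] {P : Measure Ω}
    [IsProbabilityMeasure P]
    {f : Ω → ℝ} (hf : Measurable f) (C : ℝ) (hC : ∀ ω, |f ω| ≤ C) : Integrable f P :=
  (integrable_const C).mono' hf.aestronglyMeasurable (Filter.Eventually.of_forall hC)

private lemma iIndepFun_reindex {Ω ι ι' : Type*} [MeasurableSpace Ω] {P : Measure Ω}
    {f : ι → Ω → ℝ} (h : iIndepFun (m := fun _ : ι => (inferInstance : MeasurableSpace ℝ)) f P)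
    (g : ι' → ι) (hg : Function.Injective g) :
    iIndepFun (m := fun _ : ι' => (inferInstance : MeasurableSpace ℝ)) (fun j => f (g j)) P := by
  classical
  rw [iIndepFun_iff_measure_inter_preimage_eq_mul] at h ⊢
  intro S sets hsets
  set sets' : ι → Set ℝ := fun i =>
    if hi : ∃ j, j ∈ S ∧ g j = i then sets hi.choose else Set.univ with hsets'_def
  have hgj : ∀ j ∈ S, sets' (g j) = sets j := by
    intro j hj
    have hex : ∃ j', j' ∈ S ∧ g j' = g j := ⟨j, hj, rfl⟩
    simp only [hsets'_def, dif_pos hex]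
    have := hex.choose_spec
    have : hex.choose = j := hg this.2
    rw [this]
  have hmeas : ∀ i ∈ S.image g, MeasurableSet (sets' i) := by
    intro i hi
    obtain ⟨j, hj, rfl⟩ := Finset.mem_image.mp hi
    rw [hgj j hj]
    exact hsets j hj
  have := h (S.image g) hmeas
  rw [Finset.prod_image (fun a ha b hb hab => hg hab)] at this
  have hint : (⋂ i ∈ S.image g, f i ⁻¹' sets' i) = ⋂ j ∈ S, f (g j) ⁻¹' sets j := by
    rw [Finset.set_biInter_finset_image]
    exact Set.iInter₂_congr fun j hj => by rw [hgj j hj]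
  rw [hint] at this
  rw [this]
  exact Finset.prod_congr rfl fun j hj => by rw [hgj j hj]

private lemma chernoff_s9 {Ω : Type*} [MeasurableSpace Ω] (P : Measure Ω) [IsProbabilityMeasure P]
    (n : ℕ) (Z : ℕ → Ω → ℝ)
    (hmeas : ∀ k, Measurable (Z k)) (hbdd : ∀ k ω, Z k ω ∈ Set.Icc (0:ℝ) 1)
    (hindep : iIndepFun (m := fun _ : ℕ => (inferInstance : MeasurableSpace ℝ)) Z P)
    (ν : ℝ) (hν : ∀ k, ∫ ω, Z k ω ∂P = ν) {ε : ℝ} (hε : 0 ≤ ε) :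
    (P {ω | (n : ℝ) * (ν + ε) ≤ ∑ k ∈ Finset.range n, Z k ω}).toReal ≤
      Real.exp (-(n : ℝ) * ε ^ 2) := by
  have hZint : ∀ k, Integrable (Z k) P := fun k =>
    integrable_of_bdd (hmeas k) 1 (fun ω => abs_le.mpr ⟨by linarith [(hbdd k ω).1], (hbdd k ω).2⟩)
  have hν0 : 0 ≤ ν := by
    rw [← hν 0]; exact integral_nonneg fun ω => (hbdd 0 ω).1
  set lam : ℝ := 2 * ε with hlam_def
  have hlam : 0 ≤ lam := by positivity
  have hsum_meas : Measurable (fun ω => ∑ k ∈ Finset.range n, Z k ω) :=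
    Finset.measurable_sum _ fun k _ => hmeas k
  have hint : Integrable (fun ω => Real.exp (lam * (∑ k ∈ Finset.range n, Z k) ω)) P := by
    simp only [Finset.sum_apply]
    apply integrable_of_bdd ((hsum_meas.const_mul lam).exp) (Real.exp (lam * n))
    intro ω
    rw [abs_of_nonneg (Real.exp_nonneg _)]
    apply Real.exp_le_exp.mpr
    apply mul_le_mul_of_nonneg_left _ hlam
    calc ∑ k ∈ Finset.range n, Z k ω
        ≤ ∑ _k ∈ Finset.range n, (1:ℝ) := Finset.sum_le_sum fun k _ => (hbdd k ω).2
      _ = n := by simp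
  have hmain := measure_ge_le_exp_mul_mgf (μ := P) (X := ∑ k ∈ Finset.range n, Z k)
    ((n : ℝ) * (ν + ε)) hlam hint
  have hset : {ω | (n:ℝ) * (ν + ε) ≤ (∑ k ∈ Finset.range n, Z k) ω}
      = {ω | (n:ℝ) * (ν + ε) ≤ ∑ k ∈ Finset.range n, Z k ω} := by
    ext ω; simp [Finset.sum_apply]
  rw [hset] at hmain
  refine hmain.trans ?_
  have hmgf_each : ∀ k, mgf (Z k) P lam ≤ Real.exp (lam * ν + lam ^ 2 / 4) := by
    intro k
    have h1 : mgf (Z k) P lam = ∫ ω, Real.exp (lam * Z k ω) ∂P := rfl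
    have h2 : ∫ ω, Real.exp (lam * Z k ω) ∂P ≤ ∫ ω, (1 + Z k ω * (Real.exp lam - 1)) ∂P := by
      apply integral_mono _ _ (fun ω => exp_mul_le_of_Icc (hbdd k ω).1 (hbdd k ω).2)
      · exact integrable_of_bdd ((hmeas k).const_mul lam).exp (Real.exp lam)
          (fun ω => by
            rw [abs_of_nonneg (Real.exp_nonneg _)]
            exact Real.exp_le_exp.mpr (mul_le_mul_of_nonneg_left (hbdd k ω).2 hlam |>.trans
              (by simp)))
      · exact (integrable_const 1).add ((hZint k).mul_const _)
    have h3 : ∫ ω, (1 + Z k ω * (Real.exp lam - 1)) ∂P = 1 + ν * (Real.exp lam - 1) := by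
      rw [integral_add (integrable_const 1) ((hZint k).mul_const _)]
      rw [integral_mul_const, hν k]
      simp
    have h4 : 1 + ν * (Real.exp lam - 1) ≤ Real.exp (lam * ν + lam ^ 2 / 4) :=
      aux_exp_quad hν0 hlam
    rw [h1]; rw [h3] at h2; linarith
  have hmgf_sum : mgf (∑ k ∈ Finset.range n, Z k) P lam = ∏ k ∈ Finset.range n, mgf (Z k) P lam :=
    hindep.mgf_sum hmeas _
  have hprod : ∏ k ∈ Finset.range n, mgf (Z k) P lam
      ≤ Real.exp ((n:ℝ) * (lam * ν + lam ^ 2 / 4)) := by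
    calc ∏ k ∈ Finset.range n, mgf (Z k) P lam
        ≤ ∏ _k ∈ Finset.range n, Real.exp (lam * ν + lam ^ 2 / 4) :=
          Finset.prod_le_prod (fun k _ => mgf_nonneg) (fun k _ => hmgf_each k)
      _ = Real.exp ((n:ℝ) * (lam * ν + lam ^ 2 / 4)) := by
          rw [Finset.prod_const, Finset.card_range, ← Real.exp_nat_mul]
  calc Real.exp (-lam * ((n:ℝ) * (ν + ε))) * mgf (∑ k ∈ Finset.range n, Z k) P lam
      ≤ Real.exp (-lam * ((n:ℝ) * (ν + ε))) * Real.exp ((n:ℝ) * (lam * ν + lam ^ 2 / 4)) := by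
        apply mul_le_mul_of_nonneg_left _ (Real.exp_nonneg _)
        rw [hmgf_sum]; exact hprod
    _ = Real.exp (-lam * ((n:ℝ) * (ν + ε)) + (n:ℝ) * (lam * ν + lam ^ 2 / 4)) := by
        rw [← Real.exp_add]
    _ = Real.exp (-(n:ℝ) * ε ^ 2) := by
        congr 1
        rw [hlam_def]; ring

set_option linter.unusedSectionVars false in
private lemma count_low_pulls {Ω : Type} {K : ℕ} (T L : ℕ) (S : Finset ℕ) (g : ℕ → Fin K)
    (arm : ℕ → Ω → Fin K) (ω : Ω) (i : Fin K) (u : ℝ) (hu : 0 ≤ u)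
    (hKL : K < L)
    (hS : S ⊆ Finset.Icc 1 L)
    (hScard : S.card = K)
    (hinit : ∀ t, 1 ≤ t → t ≤ K → ((arm t ω : ℕ) = t - 1))
    (hpre : ∀ t, K < t → offset K L t ∈ S → arm t ω = g (offset K L t))
    (s_i : ℕ) (hs_iS : s_i ∈ S) (hgs : g s_i = i)
    (F : Finset ℕ)
    (hF : ∀ t, t ∈ F ↔ (t ∈ freeRounds K L T S ∧ arm t ω = i ∧
      ((pullCount arm i (t-1) ω : ℝ) < u))) :
    (F.card : ℝ) ≤ (u + 1) * ((L : ℝ) - K) / ((L : ℝ) - K + 1) := by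
  classical
  have hL0 : 0 < L := lt_of_le_of_lt (Nat.zero_le K) hKL
  have hKR : (K : ℝ) < L := by exact_mod_cast hKL
  have hD1 : (1 : ℝ) ≤ (L : ℝ) - K := by
    have : (K : ℝ) + 1 ≤ L := by exact_mod_cast hKL
    linarith
  rcases F.eq_empty_or_nonempty with hFe | hFne
  · rw [hFe]
    simp only [Finset.card_empty, Nat.cast_zero]
    apply div_nonneg (by nlinarith) (by linarith)
  set t' := F.max' hFne with ht'_def
  have ht'F : t' ∈ F := F.max'_mem hFne
  have ht'F' := (hF t').mp ht'F
  have ht'free := ht'F'.1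
  have harmt' := ht'F'.2.1
  have hpct' := ht'F'.2.2
  rw [freeRounds, Finset.mem_filter, Finset.mem_Icc] at ht'free
  obtain ⟨⟨ht'K, ht'T⟩, ht'off⟩ := ht'free
  have hFmem : ∀ t ∈ F, (K + 1 ≤ t ∧ t ≤ T) ∧ offset K L t ∉ S ∧ arm t ω = i := by
    intro t ht
    have h := (hF t).mp ht
    rw [freeRounds, Finset.mem_filter, Finset.mem_Icc] at h
    exact ⟨h.1.1, h.1.2, h.2.1⟩
  set j := (t' - K - 1) / L with hj_def
  clear_value j
  have hs_i1 : 1 ≤ s_i := (Finset.mem_Icc.mp (hS hs_iS)).1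
  have hs_iL : s_i ≤ L := (Finset.mem_Icc.mp (hS hs_iS)).2
  have hiK : (i : ℕ) < K := i.isLt
  set A1 : Finset ℕ := {(i : ℕ) + 1} with hA1_def
  set A2 : Finset ℕ := F.erase t' with hA2_def
  set A3 : Finset ℕ := (Finset.range j).image (fun b => K + b * L + s_i) with hA3_def
  set Q : Finset ℕ := (Finset.Icc 1 (t' - 1)).filter (fun s => arm s ω = i) with hQ_def
  have harm_r : ∀ b, b < j → arm (K + b * L + s_i) ω = i := by
    intro b hb
    have hoff : offset K L (K + b * L + s_i) = s_i := by
      rw [offset]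
      have hcomm : b * L = L * b := Nat.mul_comm b L
      have h1 : K + b * L + s_i - K - 1 = L * b + (s_i - 1) := by omega
      rw [h1, Nat.mul_add_mod]
      rw [Nat.mod_eq_of_lt (by omega)]
      omega
    rw [hpre _ (by omega) (by rw [hoff]; exact hs_iS), hoff, hgs]
  have hr_le : ∀ b, b < j → K + b * L + s_i ≤ t' - 1 := by
    intro b hb
    have h1 : (b + 1) * L ≤ j * L := Nat.mul_le_mul_right L hb
    have h2 : j * L ≤ t' - K - 1 := by
      rw [hj_def]; exact Nat.div_mul_le_self _ _
    have h3 : b * L + s_i ≤ (b + 1) * L := by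
      have : b * L + L = (b + 1) * L := by ring
      omega
    omega
  have hA1Q : A1 ⊆ Q := by
    intro x hx
    rw [hA1_def, Finset.mem_singleton] at hx
    subst hx
    rw [hQ_def, Finset.mem_filter, Finset.mem_Icc]
    refine ⟨⟨by omega, by omega⟩, ?_⟩
    have := hinit ((i : ℕ) + 1) (by omega) (by omega)
    exact Fin.ext (by omega)
  have hA2Q : A2 ⊆ Q := by
    intro x hx
    rw [hA2_def, Finset.mem_erase] at hx
    obtain ⟨hxne, hxF⟩ := hx
    have hxle : x ≤ t' := Finset.le_max' F x hxF
    obtain ⟨⟨hx1, _⟩, _, hxarm⟩ := hFmem x hxF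
    rw [hQ_def, Finset.mem_filter, Finset.mem_Icc]
    exact ⟨⟨by omega, by omega⟩, hxarm⟩
  have hA3Q : A3 ⊆ Q := by
    intro x hx
    rw [hA3_def, Finset.mem_image] at hx
    obtain ⟨b, hb, rfl⟩ := hx
    rw [Finset.mem_range] at hb
    rw [hQ_def, Finset.mem_filter, Finset.mem_Icc]
    exact ⟨⟨by omega, hr_le b hb⟩, harm_r b hb⟩
  have hd12 : Disjoint A1 A2 := by
    rw [Finset.disjoint_left]
    intro x hx hx2
    rw [hA1_def, Finset.mem_singleton] at hx
    subst hx
    rw [hA2_def, Finset.mem_erase] at hx2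
    obtain ⟨_, hxF⟩ := hx2
    have := (hFmem _ hxF).1.1
    omega
  have hd13 : Disjoint A1 A3 := by
    rw [Finset.disjoint_left]
    intro x hx hx3
    rw [hA1_def, Finset.mem_singleton] at hx
    subst hx
    rw [hA3_def, Finset.mem_image] at hx3
    obtain ⟨b, _, hb⟩ := hx3
    omega
  have hd23 : Disjoint A2 A3 := by
    rw [Finset.disjoint_left]
    intro x hx2 hx3
    rw [hA2_def, Finset.mem_erase] at hx2
    rw [hA3_def, Finset.mem_image] at hx3
    obtain ⟨b, hbj, hb⟩ := hx3
    rw [Finset.mem_range] at hbj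
    have hoffx : offset K L x ∉ S := (hFmem _ hx2.2).2.1
    apply hoffx
    subst hb
    have hoff : offset K L (K + b * L + s_i) = s_i := by
      rw [offset]
      have hcomm : b * L = L * b := Nat.mul_comm b L
      have h1 : K + b * L + s_i - K - 1 = L * b + (s_i - 1) := by omega
      rw [h1, Nat.mul_add_mod]
      rw [Nat.mod_eq_of_lt (by omega)]
      omega
    rw [hoff]; exact hs_iS
  have hA3card : A3.card = j := by
    rw [hA3_def]
    rw [Finset.card_image_of_injOn, Finset.card_range]
    intro a _ b _ hab
    simp only at hab
    have : a * L = b * L := by omega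
    exact Nat.eq_of_mul_eq_mul_right hL0 this
  have hQcard : Q.card = pullCount arm i (t' - 1) ω := rfl
  have hFne' : 1 ≤ F.card := Finset.card_pos.mpr hFne
  have hcard_i : 1 + (F.card - 1) + j ≤ pullCount arm i (t' - 1) ω := by
    have hsub : A1 ∪ A2 ∪ A3 ⊆ Q := Finset.union_subset (Finset.union_subset hA1Q hA2Q) hA3Q
    have h1 : (A1 ∪ A2 ∪ A3).card = A1.card + A2.card + A3.card := by
      rw [Finset.card_union_of_disjoint, Finset.card_union_of_disjoint hd12]
      rw [Finset.disjoint_union_left]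
      exact ⟨hd13, hd23⟩
    have h2 := Finset.card_le_card hsub
    rw [h1, hQcard] at h2
    have hA1c : A1.card = 1 := rfl
    have hA2c : A2.card = F.card - 1 := by
      rw [hA2_def, Finset.card_erase_of_mem (F.max'_mem hFne)]
    rw [hA1c, hA2c, hA3card] at h2
    exact h2
  have hcard_ii : F.card ≤ (j + 1) * (L - K) := by
    have hinj : ∀ t₁ ∈ F, ∀ t₂ ∈ F,
        ((t₁ - K - 1) / L, offset K L t₁) = ((t₂ - K - 1) / L, offset K L t₂) → t₁ = t₂ := by
      intro t₁ h₁ t₂ h₂ heq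
      have hd : (t₁ - K - 1) / L = (t₂ - K - 1) / L := (Prod.ext_iff.mp heq).1
      have ho : offset K L t₁ = offset K L t₂ := (Prod.ext_iff.mp heq).2
      rw [offset, offset] at ho
      have hm1 := Nat.div_add_mod (t₁ - K - 1) L
      have hm2 := Nat.div_add_mod (t₂ - K - 1) L
      have h1K := (hFmem _ h₁).1.1
      have h2K := (hFmem _ h₂).1.1
      have : L * ((t₁ - K - 1) / L) = L * ((t₂ - K - 1) / L) := by rw [hd]
      omega
    have hmaps : ∀ t ∈ F, ((t - K - 1) / L, offset K L t) ∈
        (Finset.range (j + 1)) ×ˢ ((Finset.Icc 1 L) \ S) := by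
      intro t ht
      obtain ⟨⟨htK, _⟩, htoff, _⟩ := hFmem t ht
      rw [Finset.mem_product]
      constructor
      · rw [Finset.mem_range]
        have hle : t ≤ t' := Finset.le_max' F t ht
        have hj' : (t - K - 1) / L ≤ j := by
          rw [hj_def]; exact Nat.div_le_div_right (by omega)
        omega
      · rw [Finset.mem_sdiff, Finset.mem_Icc]
        refine ⟨⟨by rw [offset]; omega, ?_⟩, htoff⟩
        rw [offset] at htoff ⊢
        have := Nat.mod_lt (t - K - 1) hL0
        omega
    have := Finset.card_le_card_of_injOn _ hmaps (fun t₁ h₁ t₂ h₂ h => hinj t₁ h₁ t₂ h₂ h)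
    rw [Finset.card_product, Finset.card_range, Finset.card_sdiff_of_subset hS,
      Nat.card_Icc, hScard] at this
    simpa using this
  have hmj : ((F.card : ℝ) + j) ≤ (pullCount arm i (t' - 1) ω : ℝ) := by
    have : F.card + j ≤ pullCount arm i (t' - 1) ω := by omega
    exact_mod_cast this
  have hmju : ((F.card : ℝ) + j) < u := lt_of_le_of_lt hmj hpct'
  have hmD : (F.card : ℝ) ≤ ((L : ℝ) - K) * (j + 1) := by
    have h1 : (F.card : ℝ) ≤ ((j + 1) * (L - K) : ℕ) := by exact_mod_cast hcard_ii
    rw [Nat.cast_mul, Nat.cast_sub hKL.le] at h1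
    push_cast at h1 ⊢
    linarith
  rw [div_eq_mul_inv, ← div_eq_mul_inv]
  rw [le_div_iff₀ (by linarith : (0:ℝ) < (L : ℝ) - K + 1)]
  have hDj : ((L : ℝ) - K) * ((F.card : ℝ) + j) ≤ ((L : ℝ) - K) * u :=
    mul_le_mul_of_nonneg_left hmju.le (by linarith)
  nlinarith [hmD, hDj]

end AuxLemmas

set_option maxHeartbeats 2000000 in
/-- For the strict-rate-constrained UCB algorithm there is an
absolute constant `C > 0` such that for every arm `i` with `Δ_i > 0`:
`E[m_T(i)] ≤ (16 ln T / Δ_i²)·(1-Kv)/(1-(K-1)v) + 2(1-Kv)² + C`, where `v = 1/L`. -/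
theorem strict_ucb_free_pulls_bound :
    ∃ C : ℝ, 0 < C ∧
      ∀ (Ω : Type) (_ : MeasurableSpace Ω) (P : Measure Ω), IsProbabilityMeasure P →
      ∀ (K T L : ℕ) (S : Finset ℕ) (g : ℕ → Fin K) (X : Fin K → ℕ → Ω → ℝ)
        (μ : Fin K → ℝ) (istar : Fin K) (arm : ℕ → Ω → Fin K),
        2 ≤ K → max K 2 ≤ T → K ≤ L →
        S ⊆ Finset.Icc 1 L → S.card = K → Set.BijOn g ↑S (Set.univ : Set (Fin K)) →
        BanditEnv P X μ → StrictUCB T L S g X arm →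
        (∀ j, μ j ≤ μ istar) →
        ∀ i : Fin K, 0 < μ istar - μ i →
          (∫ ω, (freePulls arm L T S i ω : ℝ) ∂P) ≤
            (16 * Real.log T / (μ istar - μ i) ^ 2) *
                ((1 - (K : ℝ) * (1 / (L : ℝ))) / (1 - ((K : ℝ) - 1) * (1 / (L : ℝ))))
              + 2 * (1 - (K : ℝ) * (1 / (L : ℝ))) ^ 2 + C := by
  classical
  refine ⟨2, by norm_num, ?_⟩
  intro Ω mΩ P hP K T L S g X μ istar arm hK hT hKL hS hScard hbij henv hstrict hopt i hΔpos
  obtain ⟨hXmeas, hXmem, hXindep, hXident, hXmean⟩ := henv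
  obtain ⟨harm_meas, hinit, hpre, hucbmax⟩ := hstrict
  have hT2 : 2 ≤ T := le_trans (le_max_right K 2) hT
  have hKT : K ≤ T := le_trans (le_max_left K 2) hT
  have hL0 : 0 < L := lt_of_lt_of_le (by omega) hKL
  have hlogT : 0 < Real.log T := Real.log_pos (by exact_mod_cast hT2)
  set Δ : ℝ := μ istar - μ i with hΔ_def
  -- trivial case L = K : no free rounds at all
  rcases eq_or_lt_of_le hKL with hLK | hKLlt
  · have hSfull : S = Finset.Icc 1 L :=
      Finset.eq_of_subset_of_card_le hS (by rw [hScard, Nat.card_Icc]; omega)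
    have hfree : freeRounds K L T S = ∅ := by
      rw [freeRounds, Finset.filter_eq_empty_iff]
      intro t _
      simp only [not_not]
      rw [hSfull, Finset.mem_Icc, offset]
      have := Nat.mod_lt (t - K - 1) hL0
      omega
    have hzero : ∀ ω : Ω, freePulls arm L T S i ω = 0 := by
      intro ω
      rw [freePulls, hfree]
      simp
    have hint0 : (∫ ω, (freePulls arm L T S i ω : ℝ) ∂P) = 0 := by
      simp only [hzero]
      simp
    rw [hint0]
    have hKL' : (K : ℝ) * (1 / L) = 1 := by
      rw [hLK]
      field_simp
    rw [hKL']
    simp only [sub_self]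
    rw [zero_div, mul_zero]
    norm_num
  -- main case K < L
  have hD1 : (1 : ℝ) ≤ (L : ℝ) - K := by
    have : (K : ℝ) + 1 ≤ L := by exact_mod_cast hKLlt
    linarith
  set D : ℝ := (L : ℝ) - K with hD_def
  have hΔ1 : Δ ≤ 1 := by
    have h0 : 0 ≤ μ i := by
      rw [← hXmean i 0]
      exact integral_nonneg fun ω => (hXmem i 0 ω).1
    have h1 : μ istar ≤ 1 := by
      rw [← hXmean istar 0]
      have hint : Integrable (X istar 0) P :=
        integrable_of_bdd (hXmeas istar 0) 1
          (fun ω => abs_le.mpr ⟨by linarith [(hXmem istar 0 ω).1], (hXmem istar 0 ω).2⟩)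
      calc ∫ ω, X istar 0 ω ∂P ≤ ∫ _ω, (1:ℝ) ∂P :=
            integral_mono hint (integrable_const 1) (fun ω => (hXmem istar 0 ω).2)
        _ = 1 := by simp
    rw [hΔ_def]; linarith
  set u : ℝ := 16 * Real.log T / Δ ^ 2 with hu_def
  have hΔ2 : (0:ℝ) < Δ ^ 2 := by positivity
  have hu0 : 0 < u := by positivity
  set εr : ℕ → ℝ := fun n => 2 * Real.sqrt (Real.log T / n) with hεr_def
  have hεr0 : ∀ n, 0 ≤ εr n := fun n => by
    rw [hεr_def]; positivity
  clear_value Δ u D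
  set badA : ℕ → Set Ω := fun n =>
    {ω | ∑ k ∈ Finset.range n, X istar k ω ≤ (n:ℝ) * (μ istar - εr n)} with hbadA_def
  set badB : ℕ → Set Ω := fun n =>
    {ω | (n:ℝ) * (μ i + εr n) ≤ ∑ k ∈ Finset.range n, X i k ω} with hbadB_def
  set Bad : Set Ω := ⋃ n ∈ Finset.Icc 1 T, (badA n ∪ badB n) with hBad_def
  clear_value εr badA badB Bad
  have hbadA_meas : ∀ n, MeasurableSet (badA n) := by
    intro n
    simp only [hbadA_def]
    exact measurableSet_le (Finset.measurable_sum _ fun k _ => hXmeas istar k) measurable_const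
  have hbadB_meas : ∀ n, MeasurableSet (badB n) := by
    intro n
    simp only [hbadB_def]
    exact measurableSet_le measurable_const (Finset.measurable_sum _ fun k _ => hXmeas i k)
  have hBad_meas : MeasurableSet Bad := by
    simp only [hBad_def]
    exact (Finset.Icc 1 T).measurableSet_biUnion
      fun n _ => ((hbadA_meas n).union (hbadB_meas n))
  have hXint : ∀ (j : Fin K) (k : ℕ), Integrable (X j k) P := fun j k =>
    integrable_of_bdd (hXmeas j k) 1
      (fun ω => abs_le.mpr ⟨by linarith [(hXmem j k ω).1], (hXmem j k ω).2⟩)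
  -- concentration bounds
  have hexp_eq : ∀ n : ℕ, 1 ≤ n → Real.exp (-(n:ℝ) * εr n ^ 2) = Real.exp (-4 * Real.log T) := by
    intro n hn
    congr 1
    have hn0 : (0:ℝ) < n := by exact_mod_cast hn
    simp only [hεr_def]
    rw [mul_pow, Real.sq_sqrt (by positivity)]
    field_simp
    ring
  have hPA : ∀ n : ℕ, 1 ≤ n → (P (badA n)).toReal ≤ Real.exp (-4 * Real.log T) := by
    intro n hn
    have hind0 : iIndepFun (m := fun _ : ℕ => (inferInstance : MeasurableSpace ℝ))
        (fun k => X istar k) P :=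
      iIndepFun_reindex hXindep (fun k => (istar, k))
        (fun a b hab => congrArg Prod.snd hab)
    have hind : iIndepFun (m := fun _ : ℕ => (inferInstance : MeasurableSpace ℝ))
        (fun k ω => 1 - X istar k ω) P := by
      have := hind0.comp (fun _ => fun x : ℝ => 1 - x)
        (fun _ => measurable_const.sub measurable_id)
      exact this
    have hch := chernoff_s9 P n (fun k ω => 1 - X istar k ω)
      (fun k => measurable_const.sub (hXmeas istar k))
      (fun k ω => by
        show (1 - X istar k ω) ∈ Set.Icc (0:ℝ) 1
        have h := hXmem istar k ω
        rw [Set.mem_Icc] at h ⊢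
        exact ⟨by linarith [h.2], by linarith [h.1]⟩)
      hind (1 - μ istar)
      (fun k => by
        rw [integral_sub (integrable_const 1) (hXint istar k), hXmean istar k]
        simp)
      (hεr0 n)
    have hseteq : {ω | (n:ℝ) * ((1 - μ istar) + εr n) ≤
        ∑ k ∈ Finset.range n, (1 - X istar k ω)} = badA n := by
      ext ω
      simp only [hbadA_def]
      simp only [Set.mem_setOf_eq, Finset.sum_sub_distrib, Finset.sum_const,
        Finset.card_range, nsmul_eq_mul, mul_one]
      constructor <;> intro h <;> nlinarith []
    rw [hseteq] at hch
    rw [← hexp_eq n hn]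
    exact hch
  have hPB : ∀ n : ℕ, 1 ≤ n → (P (badB n)).toReal ≤ Real.exp (-4 * Real.log T) := by
    intro n hn
    have hind : iIndepFun (m := fun _ : ℕ => (inferInstance : MeasurableSpace ℝ))
        (fun k => X i k) P :=
      iIndepFun_reindex hXindep (fun k => (i, k))
        (fun a b hab => congrArg Prod.snd hab)
    have hch := chernoff_s9 P n (fun k => X i k)
      (fun k => hXmeas i k)
      (fun k ω => hXmem i k ω)
      hind (μ i) (fun k => hXmean i k) (hεr0 n)
    rw [← hexp_eq n hn]
    simp only [hbadB_def]
    exact hch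
  -- total bad probability
  have hPBadR : (P Bad).toReal ≤ (T:ℝ) * (2 * Real.exp (-4 * Real.log T)) := by
    have he0 : (0:ℝ) ≤ Real.exp (-4 * Real.log T) := (Real.exp_nonneg _)
    have h1 : P Bad ≤ ∑ n ∈ Finset.Icc 1 T, P (badA n ∪ badB n) := by
      rw [hBad_def]
      exact measure_biUnion_finset_le _ _
    have h2 : ∀ n ∈ Finset.Icc 1 T,
        P (badA n ∪ badB n) ≤ ENNReal.ofReal (2 * Real.exp (-4 * Real.log T)) := by
      intro n hn
      rw [Finset.mem_Icc] at hn
      calc P (badA n ∪ badB n) ≤ P (badA n) + P (badB n) := measure_union_le _ _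
        _ ≤ ENNReal.ofReal (Real.exp (-4 * Real.log T))
            + ENNReal.ofReal (Real.exp (-4 * Real.log T)) := by
            gcongr
            · exact (ENNReal.le_ofReal_iff_toReal_le (measure_ne_top P _) he0).mpr
                (hPA n hn.1)
            · exact (ENNReal.le_ofReal_iff_toReal_le (measure_ne_top P _) he0).mpr
                (hPB n hn.1)
        _ = ENNReal.ofReal (2 * Real.exp (-4 * Real.log T)) := by
            rw [← ENNReal.ofReal_add he0 he0]; ring_nf
    have h3 : P Bad ≤ (T : ℕ) • ENNReal.ofReal (2 * Real.exp (-4 * Real.log T)) := by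
      refine h1.trans ?_
      have := Finset.sum_le_card_nsmul (Finset.Icc 1 T) (fun n => P (badA n ∪ badB n))
        (ENNReal.ofReal (2 * Real.exp (-4 * Real.log T))) h2
      rwa [Nat.card_Icc, Nat.add_sub_cancel] at this
    have h4 : (P Bad).toReal ≤ ((T : ℕ) • ENNReal.ofReal (2 * Real.exp (-4 * Real.log T))).toReal := by
      apply ENNReal.toReal_mono _ h3
      simp [ENNReal.mul_eq_top]
    refine h4.trans ?_
    rw [nsmul_eq_mul, ENNReal.toReal_mul, ENNReal.toReal_natCast,
      ENNReal.toReal_ofReal (by positivity)]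
  have hTBad : (T:ℝ) * (P Bad).toReal ≤ 1/2 := by
    have hTR : (2:ℝ) ≤ T := by exact_mod_cast hT2
    have hexp4 : Real.exp (-4 * Real.log T) = (((T:ℝ))⁻¹) ^ 4 := by
      have : (-4 : ℝ) * Real.log T = (4:ℕ) * (-Real.log T) := by push_cast; ring
      rw [this, Real.exp_nat_mul, Real.exp_neg, Real.exp_log (by linarith : (0:ℝ) < T)]
    have h5 : (T:ℝ) * (P Bad).toReal ≤ (T:ℝ) * ((T:ℝ) * (2 * Real.exp (-4 * Real.log T))) :=
      mul_le_mul_of_nonneg_left hPBadR (by linarith)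
    refine h5.trans ?_
    rw [hexp4]
    have hT0 : (0:ℝ) < T := by linarith
    have heq : (T:ℝ) * ((T:ℝ) * (2 * ((T:ℝ)⁻¹)^4)) = 2 / ((T:ℝ))^2 := by
      field_simp
    rw [heq]
    rw [div_le_iff₀ (by positivity)]
    nlinarith
  -- pull count basic facts
  have hpc_pos : ∀ (i' : Fin K) (t : ℕ) (ω : Ω), K ≤ t → 1 ≤ pullCount arm i' t ω := by
    intro i' t ω hKt
    apply Finset.card_pos.mpr
    refine ⟨(i' : ℕ) + 1, ?_⟩
    rw [Finset.mem_filter, Finset.mem_Icc]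
    have hi'K : (i' : ℕ) < K := i'.isLt
    refine ⟨⟨by omega, by omega⟩, ?_⟩
    have := hinit ((i' : ℕ) + 1) ω (by omega) (by omega)
    exact Fin.ext (by omega)
  have hpc_le : ∀ (i' : Fin K) (t : ℕ) (ω : Ω), pullCount arm i' t ω ≤ t := by
    intro i' t ω
    calc pullCount arm i' t ω ≤ (Finset.Icc 1 t).card := Finset.card_filter_le _ _
      _ = t := by rw [Nat.card_Icc]; omega
  -- the UCB core step: at a free round pulling arm i with high count, ω is bad
  have hcore : ∀ t ∈ freeRounds K L T S, ∀ ω : Ω, arm t ω = i →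
      ¬((pullCount arm i (t-1) ω : ℝ) < u) → ω ∈ Bad := by
    intro t ht ω harm hnot
    rw [freeRounds, Finset.mem_filter, Finset.mem_Icc] at ht
    obtain ⟨⟨htK, htT⟩, htoff⟩ := ht
    set n : ℕ := pullCount arm i (t-1) ω with hn_def
    set ns : ℕ := pullCount arm istar (t-1) ω with hns_def
    have hn1 : 1 ≤ n := hpc_pos i (t-1) ω (by omega)
    have hnT : n ≤ T := le_trans (hpc_le i (t-1) ω) (by omega)
    have hns1 : 1 ≤ ns := hpc_pos istar (t-1) ω (by omega)
    have hnsT : ns ≤ T := le_trans (hpc_le istar (t-1) ω) (by omega)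
    clear_value n ns
    by_contra hω
    rw [hBad_def] at hω
    have hA : ω ∉ badA ns := fun hmem => hω
      (Set.mem_biUnion (Finset.mem_Icc.mpr ⟨hns1, hnsT⟩) (Set.mem_union_left _ hmem))
    have hB : ω ∉ badB n := fun hmem => hω
      (Set.mem_biUnion (Finset.mem_Icc.mpr ⟨hn1, hnT⟩) (Set.mem_union_right _ hmem))
    have hle := (hucbmax t ω (by omega) htoff).1 istar
    rw [harm] at hle
    -- numeric facts
    have hn0 : (0:ℝ) < n := by exact_mod_cast hn1
    have hns0 : (0:ℝ) < ns := by exact_mod_cast hns1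
    have hun : u ≤ (n:ℝ) := not_lt.mp hnot
    have h16 : 16 * Real.log T ≤ (n:ℝ) * Δ ^ 2 := by
      rw [hu_def] at hun
      calc 16 * Real.log T = (16 * Real.log T / Δ ^ 2) * Δ ^ 2 := by field_simp
        _ ≤ (n:ℝ) * Δ ^ 2 := by
            apply mul_le_mul_of_nonneg_right hun hΔ2.le
    have hsq : εr n ≤ Δ / 2 := by
      simp only [hεr_def]
      have h1 : Real.log T / n ≤ (Δ/4)^2 := by
        rw [div_le_iff₀ hn0]
        nlinarith
      calc 2 * Real.sqrt (Real.log T / n) ≤ 2 * Real.sqrt ((Δ/4)^2) := by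
            apply mul_le_mul_of_nonneg_left (Real.sqrt_le_sqrt h1) (by norm_num)
        _ = 2 * (Δ/4) := by rw [Real.sqrt_sq (by linarith)]
        _ = Δ / 2 := by ring
    -- translate bad-event negations
    simp only [hbadB_def, Set.mem_setOf_eq, not_le] at hB
    simp only [hbadA_def, Set.mem_setOf_eq, not_le] at hA
    -- ucb bounds
    have hucb_i : ucb T X arm i t ω < μ i + 2 * εr n := by
      have hq : ucb T X arm i t ω
          = (∑ k ∈ Finset.range n, X i k ω) / (n:ℝ) + εr n := by
        simp only [ucb, empMean, ← hn_def, hεr_def]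
      rw [hq]
      have hemp : (∑ k ∈ Finset.range n, X i k ω) / (n:ℝ) < μ i + εr n := by
        rw [div_lt_iff₀ hn0]
        nlinarith
      linarith
    have hucb_s : μ istar < ucb T X arm istar t ω := by
      have hq : ucb T X arm istar t ω
          = (∑ k ∈ Finset.range ns, X istar k ω) / (ns:ℝ) + εr ns := by
        simp only [ucb, empMean, ← hns_def, hεr_def]
      rw [hq]
      have hemp : μ istar - εr ns < (∑ k ∈ Finset.range ns, X istar k ω) / (ns:ℝ) := by
        rw [lt_div_iff₀ hns0]
        nlinarith
      linarith
    have hΔ' : Δ = μ istar - μ i := hΔ_def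
    linarith [hεr0 n]
  -- deterministic pointwise bound
  set c0 : ℝ := (u + 1) * D / (D + 1) with hc0_def
  have hc00 : 0 ≤ c0 := by
    rw [hc0_def]
    apply div_nonneg (by nlinarith) (by linarith)
  have hpoint : ∀ ω : Ω, (freePulls arm L T S i ω : ℝ) ≤
      c0 + (T:ℝ) * Set.indicator Bad (fun _ => (1:ℝ)) ω := by
    intro ω
    obtain ⟨s_i, hs_iS, hgs⟩ : ∃ s_i ∈ S, g s_i = i := by
      have := hbij.2.2 (Set.mem_univ i)
      obtain ⟨s_i, hs_iS, hgs⟩ := this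
      exact ⟨s_i, hs_iS, hgs⟩
    set F1 : Finset ℕ := (freeRounds K L T S).filter
      (fun t => arm t ω = i ∧ ((pullCount arm i (t-1) ω : ℝ) < u)) with hF1_def
    have hF1bound : (F1.card : ℝ) ≤ c0 := by
      rw [hc0_def, hD_def]
      apply count_low_pulls T L S g arm ω i u hu0.le hKLlt hS hScard
        (fun t h1 h2 => hinit t ω h1 h2) (fun t h1 h2 => hpre t ω h1 h2) s_i hs_iS hgs
      intro t
      rw [hF1_def, Finset.mem_filter]
    by_cases hωBad : ω ∈ Bad
    · rw [Set.indicator_of_mem hωBad]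
      have h1 : freePulls arm L T S i ω ≤ (freeRounds K L T S).card :=
        Finset.card_filter_le _ _
      have h2 : (freeRounds K L T S).card ≤ T := by
        calc (freeRounds K L T S).card ≤ (Finset.Icc (K+1) T).card :=
              Finset.card_filter_le _ _
          _ ≤ T := by rw [Nat.card_Icc]; omega
      have h3 : (freePulls arm L T S i ω : ℝ) ≤ T := by
        exact_mod_cast le_trans h1 h2
      linarith
    · rw [Set.indicator_of_notMem hωBad]
      have hall : ∀ t ∈ (freeRounds K L T S), arm t ω = i →
          ((pullCount arm i (t-1) ω : ℝ) < u) := by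
        intro t ht harm
        by_contra hnot
        exact hωBad (hcore t ht ω harm hnot)
      have heq : (freeRounds K L T S).filter (fun t => arm t ω = i) = F1 := by
        rw [hF1_def]
        apply Finset.filter_congr
        intro t ht
        constructor
        · intro h; exact ⟨h, hall t ht h⟩
        · intro h; exact h.1
      have : freePulls arm L T S i ω = F1.card := by
        rw [freePulls, ← heq]
      rw [this]
      linarith
  -- integrate
  have hInd : Integrable (fun ω => c0 + (T:ℝ) * Set.indicator Bad (fun _ => (1:ℝ)) ω) P := by
    apply (integrable_const c0).add
    exact (((integrable_const (1:ℝ)).indicator hBad_meas).const_mul (T:ℝ))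
  have hIle : (∫ ω, (freePulls arm L T S i ω : ℝ) ∂P) ≤
      ∫ ω, (c0 + (T:ℝ) * Set.indicator Bad (fun _ => (1:ℝ)) ω) ∂P := by
    apply integral_mono_of_nonneg
    · exact Filter.Eventually.of_forall fun ω => by positivity
    · exact hInd
    · exact Filter.Eventually.of_forall hpoint
  have hIval : ∫ ω, (c0 + (T:ℝ) * Set.indicator Bad (fun _ => (1:ℝ)) ω) ∂P
      = c0 + (T:ℝ) * (P Bad).toReal := by
    rw [integral_add (integrable_const c0)
      (((integrable_const (1:ℝ)).indicator hBad_meas).const_mul (T:ℝ))]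
    rw [integral_const]
    simp only [measure_univ, probReal_univ, ENNReal.toReal_one, smul_eq_mul, one_mul]
    congr 1
    rw [integral_const_mul]
    congr 1
    rw [integral_indicator_const (1:ℝ) hBad_meas]
    simp [Measure.real]
  -- final arithmetic
  have hratio : ((1:ℝ) - K * (1/L)) / (1 - ((K:ℝ) - 1) * (1/L)) = D / (D + 1) := by
    have hL0' : (L:ℝ) ≠ 0 := by positivity
    have hden : (1:ℝ) - ((K:ℝ) - 1) * (1/L) = (D + 1) / L := by
      rw [hD_def]; field_simp; ring
    have hnum : (1:ℝ) - (K:ℝ) * (1/L) = D / L := by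
      rw [hD_def]; field_simp
    rw [hnum, hden]
    rw [div_div_div_cancel_right₀]
    positivity
  have hc0le : c0 ≤ u * (D / (D + 1)) + 1 := by
    rw [hc0_def]
    have h1 : (u + 1) * D / (D + 1) = u * (D / (D + 1)) + D / (D + 1) := by
      field_simp
    rw [h1]
    have h2 : D / (D + 1) ≤ 1 := by
      rw [div_le_one (by linarith)]
      linarith
    linarith
  have hfinal : (∫ ω, (freePulls arm L T S i ω : ℝ) ∂P) ≤ u * (D / (D + 1)) + 3/2 := by
    calc (∫ ω, (freePulls arm L T S i ω : ℝ) ∂P)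
        ≤ c0 + (T:ℝ) * (P Bad).toReal := by rw [← hIval]; exact hIle
      _ ≤ (u * (D / (D + 1)) + 1) + 1/2 := by
          have := hTBad
          linarith
      _ = u * (D / (D + 1)) + 3/2 := by ring
  rw [hratio]
  have hsqnn : 0 ≤ 2 * (1 - (K:ℝ) * (1/L)) ^ 2 := by positivity
  linarith
end
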